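/- Let G = (V,E) be a graph with |V| > 1 such that both G and its complement graph Ḡ are connected. Then the maximal proper modules of G form a partition of V. -/

import Mathlib

/-- `M` is a module of the graph `G`: a nonempty vertex set such that every vertex
outside `M` is adjacent either to all of `M` or to none of `M`. -/
def IsModule {V : Type*} (G : SimpleGraph V) (M : Set V) : Prop :=
  M.Nonempty ∧ ∀ v ∉ M, ∀ w ∈ M, ∀ w' ∈ M, (G.Adj v w ↔ G.Adj v w')

/-- A maximal proper module of `G`: a module `M ⊊ V` that is not properly contained
in any other proper module. -/
def IsMaxProperModule {V : Type*} (G : SimpleGraph V) (M : Set V) : Prop :=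
  IsModule G M ∧ M ≠ Set.univ ∧
    ∀ M' : Set V, IsModule G M' → M' ≠ Set.univ → M ⊆ M' → M = M'

/-- `P` is a partition of the vertex set: a set of pairwise disjoint nonempty
subsets whose union is everything. -/
def IsPartition' {V : Type*} (P : Set (Set V)) : Prop :=
  (∀ B ∈ P, B.Nonempty) ∧ (∀ B ∈ P, ∀ B' ∈ P, B ≠ B' → B ∩ B' = ∅) ∧
    ⋃₀ P = Set.univ

lemma isModule_union {V : Type*} {G : SimpleGraph V} {M M' : Set V}
    (hM : IsModule G M) (hM' : IsModule G M') (h : (M ∩ M').Nonempty) :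
    IsModule G (M ∪ M') := by
  obtain ⟨x, hxM, hxM'⟩ := h
  refine ⟨⟨x, Or.inl hxM⟩, ?_⟩
  intro v hv w hw w' hw'
  have hvM : v ∉ M := fun h => hv (Or.inl h)
  have hvM' : v ∉ M' := fun h => hv (Or.inr h)
  have key : ∀ z, z ∈ M ∪ M' → (G.Adj v z ↔ G.Adj v x) := by
    intro z hz
    cases hz with
    | inl h => exact hM.2 v hvM z h x hxM
    | inr h => exact hM'.2 v hvM' z h x hxM'
  rw [key w hw, key w' hw']

lemma walk_mem {V : Type*} {G : SimpleGraph V} {S : Set V}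
    (h : ∀ x ∈ S, ∀ y, y ∉ S → ¬ G.Adj x y) {u v : V}
    (w : G.Walk u v) : u ∈ S → v ∈ S := by
  induction w with
  | nil => exact id
  | cons hadj _ ih =>
    intro hu
    apply ih
    by_contra hb
    exact h _ hu _ hb hadj

lemma reach_mem {V : Type*} {G : SimpleGraph V} {S : Set V}
    (h : ∀ x ∈ S, ∀ y, y ∉ S → ¬ G.Adj x y) {u v : V}
    (hr : G.Reachable u v) (hu : u ∈ S) : v ∈ S := by
  obtain ⟨w⟩ := hr
  exact walk_mem h w hu

/-- (Gallai) If `G` has more than one vertex and both `G` and its complement are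
connected, then the maximal proper modules of `G` form a partition of the vertex set. -/
theorem maxProperModules_partition {V : Type*} [Fintype V]
    (G : SimpleGraph V) (hcard : 1 < Fintype.card V)
    (hG : G.Connected) (hGc : Gᶜ.Connected) :
    IsPartition' {M : Set V | IsMaxProperModule G M} := by
  classical
  refine ⟨fun B hB => hB.1.1, ?_, ?_⟩
  · -- pairwise disjoint
    intro M hM M' hM' hne
    by_contra hint
    obtain ⟨x, hxM, hxM'⟩ := Set.nonempty_iff_ne_empty.mpr hint
    have hun : IsModule G (M ∪ M') := isModule_union hM.1 hM'.1 ⟨x, hxM, hxM'⟩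
    have huniv : M ∪ M' = Set.univ := by
      by_contra hne2
      have h1 := hM.2.2 _ hun hne2 Set.subset_union_left
      have h2 := hM'.2.2 _ hun hne2 Set.subset_union_right
      exact hne (h1.trans h2.symm)
    have hA : (M \ M').Nonempty := by
      rw [Set.diff_nonempty]
      intro hsub
      exact hne (hM.2.2 M' hM'.1 hM'.2.1 hsub)
    have hB : (M' \ M).Nonempty := by
      rw [Set.diff_nonempty]
      intro hsub
      exact hne (hM'.2.2 M hM.1 hM.2.1 hsub).symm
    obtain ⟨b0, hb0⟩ := hB
    have hBM : ∀ b ∈ M' \ M, ∀ w ∈ M, (G.Adj b w ↔ G.Adj b0 x) := by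
      intro b hb w hw
      obtain ⟨a, haM, haM'⟩ := hA
      have h1 : G.Adj b w ↔ G.Adj b a := hM.1.2 b hb.2 w hw a haM
      have h2 : G.Adj a b ↔ G.Adj a b0 := hM'.1.2 a haM' b hb.1 b0 hb0.1
      have h3 : G.Adj b0 a ↔ G.Adj b0 x := hM.1.2 b0 hb0.2 a haM x hxM
      rw [h1, G.adj_comm b a, h2, G.adj_comm a b0, h3]
    have hAM' : ∀ a ∈ M \ M', ∀ w ∈ M', (G.Adj a w ↔ G.Adj b0 x) := by
      intro a ha w hw
      have h1 : G.Adj a w ↔ G.Adj a b0 := hM'.1.2 a ha.2 w hw b0 hb0.1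
      have h2 : G.Adj b0 a ↔ G.Adj b0 x := hBM b0 hb0 a ha.1
      rw [h1, G.adj_comm a b0, h2]
    have hcross : ∀ c ∈ M ∩ M', ∀ y, y ∉ M ∩ M' → (G.Adj c y ↔ G.Adj b0 x) := by
      intro c hc y hy
      have hyu : y ∈ M ∪ M' := by rw [huniv]; trivial
      cases hyu with
      | inl h =>
        have hy' : y ∉ M' := fun h' => hy ⟨h, h'⟩
        rw [G.adj_comm]
        exact hAM' y ⟨h, hy'⟩ c hc.2
      | inr h =>
        have hy' : y ∉ M := fun h' => hy ⟨h', h⟩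
        rw [G.adj_comm]
        exact hBM y ⟨h, hy'⟩ c hc.1
    obtain ⟨a0, ha0⟩ := hA
    have ha0C : a0 ∉ M ∩ M' := fun h => ha0.2 h.2
    have hxC : x ∈ M ∩ M' := ⟨hxM, hxM'⟩
    by_cases hpos : G.Adj b0 x
    · have hstep : ∀ c ∈ M ∩ M', ∀ y, y ∉ M ∩ M' → ¬ Gᶜ.Adj c y := by
        intro c hc y hy hadj
        exact hadj.2 ((hcross c hc y hy).mpr hpos)
      exact ha0C (reach_mem hstep (hGc.preconnected x a0) hxC)
    · have hstep : ∀ c ∈ M ∩ M', ∀ y, y ∉ M ∩ M' → ¬ G.Adj c y := by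
        intro c hc y hy hadj
        exact hpos ((hcross c hc y hy).mp hadj)
      exact ha0C (reach_mem hstep (hG.preconnected x a0) hxC)
  · -- covers
    refine Set.eq_univ_of_forall fun v => ?_
    obtain ⟨u, hu⟩ := Fintype.exists_ne_of_one_lt_card hcard v
    have hsmod : IsModule G {v} :=
      ⟨⟨v, rfl⟩, fun _ _ w hw w' hw' => by
        rw [Set.eq_of_mem_singleton hw, Set.eq_of_mem_singleton hw']⟩
    have hsprop : ({v} : Set V) ≠ Set.univ := by
      intro h
      exact hu (Set.eq_of_mem_singleton (h ▸ Set.mem_univ u))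
    set T : Set (Set V) := {N | IsModule G N ∧ N ≠ Set.univ ∧ v ∈ N} with hT
    have hfin : T.Finite := Set.toFinite T
    have hTne : T.Nonempty := ⟨{v}, hsmod, hsprop, rfl⟩
    obtain ⟨N, hN, hmax0⟩ := Set.Finite.exists_maximal hfin hTne
    have hmax : ∀ N' ∈ T, N ≤ N' → N = N' := fun N' h1 h2 => le_antisymm h2 (hmax0 h1 h2)
    have hNmax : IsMaxProperModule G N :=
      ⟨hN.1, hN.2.1, fun N' hN' hne' hsub =>
        hmax N' ⟨hN', hne', hsub hN.2.2⟩ hsub⟩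
    exact Set.mem_sUnion.mpr ⟨N, hNmax, hN.2.2⟩
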